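/- Let (aₙ) be a sequence of real quaternions and let R > 0 be such that the series Σ_{n=0}^{∞} ‖aₙ‖·rⁿ converges for every 0 ≤ r < R. Let I be a real quaternion with I² = −1. Then the power series f(q) = Σ_{n=0}^{∞} qⁿ·aₙ is slice-regular on the slice L_I inside the ball of radius R: for all real x, y with x² + y² < R², writing g(x, y) = Σ_{n=0}^{∞} (x + y·I)ⁿ·aₙ, the equation ∂g/∂x + I·(∂g/∂y) = 0 holds, where the partial derivatives are the derivatives of the corresponding one-real-variable functions t ↦ Σ (t + y·I)ⁿ·aₙ at t = x and t ↦ Σ (x + t·I)ⁿ·aₙ at t = y. -/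

import Mathlib

open scoped Topology
open Filter

lemma quat_norm_natCast (n : ℕ) : ‖((n : ℕ) : Quaternion ℝ)‖ = (n : ℝ) := by
  have : ((n : ℕ) : Quaternion ℝ) = (((n : ℝ)) : Quaternion ℝ) := by norm_cast
  rw [this, Quaternion.norm_coe, Real.norm_natCast]

lemma aux_hasDeriv (a : ℕ → Quaternion ℝ) (R : ℝ)
    (hconv : ∀ r : ℝ, 0 ≤ r → r < R → Summable (fun n : ℕ => ‖a n‖ * r ^ n))
    (c d : Quaternion ℝ) (hcd : d * c = c * d) (hd : ‖d‖ ≤ 1) (x₀ : ℝ)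
    (hx : ‖(x₀ : Quaternion ℝ) * d + c‖ < R) :
    HasDerivAt (fun t : ℝ => ∑' n : ℕ, ((t : Quaternion ℝ) * d + c) ^ n * a n)
      (∑' n : ℕ, (n : Quaternion ℝ) * ((x₀ : Quaternion ℝ) * d + c) ^ (n - 1) * d * a n) x₀ := by
  set u : ℝ → Quaternion ℝ := fun t => (t : Quaternion ℝ) * d + c with hu_def
  have hudc : ∀ t : ℝ, d * u t = u t * d := by
    intro t
    simp only [hu_def, mul_add, add_mul, hcd]
    congr 1
    rw [← mul_assoc, ← Quaternion.coe_commutes]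
  have hU : ∀ t : ℝ, HasDerivAt u d t := by
    intro t
    have h1 : HasDerivAt (fun s : ℝ => s • d + c) ((1 : ℝ) • d) t :=
      ((hasDerivAt_id t).smul_const d).add_const c
    simp only [one_smul] at h1
    convert h1 using 2 with s
    simp [hu_def, Quaternion.coe_mul_eq_smul]
  have hpow : ∀ (n : ℕ) (t : ℝ),
      HasDerivAt (fun s : ℝ => (u s) ^ n) ((n : Quaternion ℝ) * (u t) ^ (n - 1) * d) t := by
    intro n
    induction n with
    | zero => intro t; simpa using hasDerivAt_const t (1 : Quaternion ℝ)
    | succ n ih =>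
      intro t
      have h := (ih t).mul (hU t)
      have he : (fun s => u s ^ n * u s) = fun s => u s ^ (n + 1) := by
        funext s; rw [← pow_succ]
      rw [show ((fun s => u s ^ n) * u) = fun s => u s ^ (n + 1) from he] at h
      refine h.congr_deriv ?_
      cases n with
      | zero => simp
      | succ m =>
        rw [Nat.add_sub_cancel, Nat.add_sub_cancel]
        have e1 : ((m + 1 : ℕ) : Quaternion ℝ) * u t ^ m * d * u t
            = ((m + 1 : ℕ) : Quaternion ℝ) * u t ^ (m + 1) * d := by
          rw [mul_assoc (((m + 1 : ℕ) : Quaternion ℝ) * u t ^ m) d (u t), hudc t, ← mul_assoc,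
            mul_assoc (((m + 1 : ℕ) : Quaternion ℝ)) (u t ^ m) (u t), ← pow_succ]
        rw [e1, show ((m + 1 + 1 : ℕ) : Quaternion ℝ) = ((m + 1 : ℕ) : Quaternion ℝ) + 1 by
          push_cast; ring, add_mul, add_mul, one_mul]
  -- analytic part
  have hq0 : (0 : ℝ) ≤ ‖u x₀‖ := norm_nonneg _
  have hR0 : 0 < R := lt_of_le_of_lt hq0 hx
  obtain ⟨r', hqr', hr'R⟩ : ∃ r' : ℝ, ‖u x₀‖ < r' ∧ r' < R :=
    ⟨(‖u x₀‖ + R) / 2, by linarith, by linarith⟩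
  have hr'0 : 0 < r' := lt_of_le_of_lt hq0 hqr'
  obtain ⟨m, hr'm, hmR⟩ : ∃ m : ℝ, r' < m ∧ m < R := ⟨(r' + R) / 2, by linarith, by linarith⟩
  have hm0 : 0 < m := hr'0.trans hr'm
  have hsum_m : Summable (fun n : ℕ => ‖a n‖ * m ^ n) := hconv m hm0.le hmR
  have hrm1 : ‖r' / m‖ < 1 := by
    rw [Real.norm_eq_abs, abs_of_nonneg (by positivity), div_lt_one hm0]; exact hr'm
  have hgeo : Summable (fun n : ℕ => (n : ℝ) * (r' / m) ^ n) := by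
    simpa using summable_pow_mul_geometric_of_norm_lt_one 1 hrm1
  obtain ⟨C, hC⟩ := hgeo.tendsto_atTop_zero.bddAbove_range
  have hC' : ∀ n : ℕ, (n : ℝ) * (r' / m) ^ n ≤ C := fun n => hC (Set.mem_range_self n)
  have hC0 : 0 ≤ C := by simpa using hC' 0
  have hM : Summable (fun n : ℕ => (C / r') * (‖a n‖ * m ^ n)) := hsum_m.mul_left _
  set s : Set ℝ := {t : ℝ | ‖u t‖ < r'} with hs_def
  have hs_open : IsOpen s := by
    have hcu : Continuous u := by
      apply Continuous.add _ continuous_const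
      exact (Quaternion.continuous_coe.comp continuous_id).mul continuous_const
    have : s = u ⁻¹' Metric.ball 0 r' := by
      ext t; simp [hs_def, Metric.mem_ball, dist_zero_right]
    rw [this]
    exact Metric.isOpen_ball.preimage hcu
  have hx₀s : x₀ ∈ s := hqr'
  have hbound : ∀ (n : ℕ) (t : ℝ), t ∈ s →
      ‖(n : Quaternion ℝ) * (u t) ^ (n - 1) * d * a n‖ ≤ (C / r') * (‖a n‖ * m ^ n) := by
    intro n t ht
    have hut : ‖u t‖ ≤ r' := le_of_lt ht
    have h1 : ‖(n : Quaternion ℝ) * (u t) ^ (n - 1) * d * a n‖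
        = (n : ℝ) * ‖u t‖ ^ (n - 1) * ‖d‖ * ‖a n‖ := by
      rw [norm_mul, norm_mul, norm_mul, norm_pow, quat_norm_natCast]
    rw [h1]
    have h2 : (n : ℝ) * ‖u t‖ ^ (n - 1) * ‖d‖ * ‖a n‖ ≤ (n : ℝ) * r' ^ (n - 1) * ‖a n‖ := by
      have hle : ‖u t‖ ^ (n - 1) ≤ r' ^ (n - 1) := pow_le_pow_left₀ (norm_nonneg _) hut _
      calc (n : ℝ) * ‖u t‖ ^ (n - 1) * ‖d‖ * ‖a n‖
          ≤ (n : ℝ) * ‖u t‖ ^ (n - 1) * 1 * ‖a n‖ := by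
            apply mul_le_mul_of_nonneg_right _ (norm_nonneg _)
            exact mul_le_mul_of_nonneg_left hd (by positivity)
        _ = (n : ℝ) * ‖u t‖ ^ (n - 1) * ‖a n‖ := by ring
        _ ≤ (n : ℝ) * r' ^ (n - 1) * ‖a n‖ := by
            apply mul_le_mul_of_nonneg_right _ (norm_nonneg _)
            exact mul_le_mul_of_nonneg_left hle (by positivity)
    refine h2.trans ?_
    cases n with
    | zero => simpa using by positivity
    | succ k =>
      have h3 : ((k + 1 : ℕ) : ℝ) * r' ^ (k + 1) ≤ C * m ^ (k + 1) := by
        have h := hC' (k + 1)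
        rw [div_pow] at h
        have hmk : (0 : ℝ) < m ^ (k + 1) := by positivity
        calc ((k + 1 : ℕ) : ℝ) * r' ^ (k + 1)
            = ((k + 1 : ℕ) : ℝ) * (r' ^ (k + 1) / m ^ (k + 1)) * m ^ (k + 1) := by
              field_simp
          _ ≤ C * m ^ (k + 1) := mul_le_mul_of_nonneg_right h hmk.le
      have h5 : ((k + 1 : ℕ) : ℝ) * r' ^ (k + 1 - 1) ≤ C / r' * m ^ (k + 1) := by
        rw [Nat.add_sub_cancel, div_mul_eq_mul_div, le_div_iff₀ hr'0]
        calc ((k + 1 : ℕ) : ℝ) * r' ^ k * r' = ((k + 1 : ℕ) : ℝ) * r' ^ (k + 1) := by ring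
          _ ≤ C * m ^ (k + 1) := h3
      calc ((k + 1 : ℕ) : ℝ) * r' ^ (k + 1 - 1) * ‖a (k + 1)‖
          ≤ (C / r' * m ^ (k + 1)) * ‖a (k + 1)‖ :=
            mul_le_mul_of_nonneg_right h5 (norm_nonneg _)
        _ = C / r' * (‖a (k + 1)‖ * m ^ (k + 1)) := by ring
  have hf' : TendstoUniformlyOn
      (fun N : ℕ => fun t : ℝ =>
        ∑ n ∈ Finset.range N, (n : Quaternion ℝ) * (u t) ^ (n - 1) * d * a n)
      (fun t : ℝ => ∑' n : ℕ, (n : Quaternion ℝ) * (u t) ^ (n - 1) * d * a n) atTop s :=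
    tendstoUniformlyOn_tsum_nat hM hbound
  have hf : ∀ᶠ N : ℕ in atTop, ∀ t : ℝ, t ∈ s → HasDerivAt
      (fun t' : ℝ => ∑ n ∈ Finset.range N, (u t') ^ n * a n)
      (∑ n ∈ Finset.range N, (n : Quaternion ℝ) * (u t) ^ (n - 1) * d * a n) t := by
    refine Eventually.of_forall fun N t _ => ?_
    exact HasDerivAt.fun_sum fun n _ => (hpow n t).mul_const (a n)
  have hfg : ∀ t : ℝ, t ∈ s → Tendsto (fun N : ℕ => ∑ n ∈ Finset.range N, (u t) ^ n * a n)
      atTop (𝓝 (∑' n : ℕ, (u t) ^ n * a n)) := by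
    intro t ht
    have hsumm : Summable (fun n : ℕ => (u t) ^ n * a n) := by
      apply Summable.of_norm_bounded (hconv r' hr'0.le hr'R)
      intro n
      rw [norm_mul, norm_pow]
      calc ‖u t‖ ^ n * ‖a n‖ ≤ r' ^ n * ‖a n‖ :=
            mul_le_mul_of_nonneg_right (pow_le_pow_left₀ (norm_nonneg _) (le_of_lt ht) n)
              (norm_nonneg _)
        _ = ‖a n‖ * r' ^ n := by ring
    exact hsumm.hasSum.tendsto_sum_nat
  exact hasDerivAt_of_tendstoUniformlyOn hs_open hf' hf hfg hx₀s


set_option maxHeartbeats 1000000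

/-- For a quaternion `I` with `I² = -1` and a power series `Σ qⁿ aₙ` whose
coefficients satisfy `Σ ‖aₙ‖ rⁿ < ∞` for all `0 ≤ r < R`, the sum is slice-regular on the
slice `L_I` inside the ball of radius `R`. -/
theorem stmt_15 (a : ℕ → Quaternion ℝ) (R : ℝ) (hR : 0 < R)
    (hconv : ∀ r : ℝ, 0 ≤ r → r < R → Summable (fun n : ℕ => ‖a n‖ * r ^ n))
    (I : Quaternion ℝ) (hI : I ^ 2 = -1)
    (x y : ℝ) (hxy : x ^ 2 + y ^ 2 < R ^ 2) :
    deriv (fun t : ℝ =>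
        ∑' n : ℕ, ((t : Quaternion ℝ) + (y : Quaternion ℝ) * I) ^ n * a n) x
      + I * deriv (fun t : ℝ =>
        ∑' n : ℕ, ((x : Quaternion ℝ) + (t : Quaternion ℝ) * I) ^ n * a n) y
      = 0 := by
  have hII : I * I = -1 := by rw [← sq]; exact hI
  -- components of I
  have h1 : I.re * I.re - I.imI * I.imI - I.imJ * I.imJ - I.imK * I.imK = -1 := by
    have := congrArg QuaternionAlgebra.re hII
    simpa [Quaternion.re_mul, Quaternion.re_one] using this
  have h2 : I.re * I.imI + I.imI * I.re + I.imJ * I.imK - I.imK * I.imJ = 0 := by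
    have := congrArg QuaternionAlgebra.imI hII
    simpa [Quaternion.imI_mul, Quaternion.imI_one] using this
  have h3 : I.re * I.imJ - I.imI * I.imK + I.imJ * I.re + I.imK * I.imI = 0 := by
    have := congrArg QuaternionAlgebra.imJ hII
    simpa [Quaternion.imJ_mul, Quaternion.imJ_one] using this
  have h4 : I.re * I.imK + I.imI * I.imJ - I.imJ * I.imI + I.imK * I.re = 0 := by
    have := congrArg QuaternionAlgebra.imK hII
    simpa [Quaternion.imK_mul, Quaternion.imK_one] using this
  have h2' : I.re * I.imI = 0 := by linear_combination h2 / 2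
  have h3' : I.re * I.imJ = 0 := by linear_combination h3 / 2
  have h4' : I.re * I.imK = 0 := by linear_combination h4 / 2
  have hre : I.re = 0 := by
    by_contra hne
    have hi : I.imI = 0 := by
      rcases mul_eq_zero.1 h2' with h | h
      · exact absurd h hne
      · exact h
    have hj : I.imJ = 0 := by
      rcases mul_eq_zero.1 h3' with h | h
      · exact absurd h hne
      · exact h
    have hk : I.imK = 0 := by
      rcases mul_eq_zero.1 h4' with h | h
      · exact absurd h hne
      · exact h
    rw [hi, hj, hk] at h1
    nlinarith [mul_self_nonneg I.re]
  have him : I.imI ^ 2 + I.imJ ^ 2 + I.imK ^ 2 = 1 := by nlinarith [h1, hre]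
  have hInorm : ‖I‖ = 1 := by
    have hns : Quaternion.normSq I = 1 := by
      rw [Quaternion.normSq_def']
      nlinarith [hre, him]
    have hmm : ‖I‖ * ‖I‖ = 1 := by
      rw [← Quaternion.normSq_eq_norm_mul_self]; exact hns
    rcases mul_self_eq_one_iff.1 hmm with h | h
    · exact h
    · nlinarith [norm_nonneg I]
  have hnormq : ‖(x : Quaternion ℝ) + (y : Quaternion ℝ) * I‖ < R := by
    have hqre : ((x : Quaternion ℝ) + (y : Quaternion ℝ) * I).re = x := by
      simp [Quaternion.re_mul, hre]
    have hqi : ((x : Quaternion ℝ) + (y : Quaternion ℝ) * I).imI = y * I.imI := by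
      simp [Quaternion.imI_mul]
    have hqj : ((x : Quaternion ℝ) + (y : Quaternion ℝ) * I).imJ = y * I.imJ := by
      simp [Quaternion.imJ_mul]
    have hqk : ((x : Quaternion ℝ) + (y : Quaternion ℝ) * I).imK = y * I.imK := by
      simp [Quaternion.imK_mul]
    have hsq : ‖(x : Quaternion ℝ) + (y : Quaternion ℝ) * I‖ ^ 2 = x ^ 2 + y ^ 2 := by
      rw [sq, ← Quaternion.normSq_eq_norm_mul_self, Quaternion.normSq_def', hqre, hqi, hqj, hqk]
      linear_combination y ^ 2 * him
    refine lt_of_pow_lt_pow_left₀ 2 hR.le ?_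
    rw [hsq]; exact hxy
  have hIq : I * ((x : Quaternion ℝ) + (y : Quaternion ℝ) * I)
      = ((x : Quaternion ℝ) + (y : Quaternion ℝ) * I) * I := by
    rw [mul_add, add_mul, Quaternion.coe_commutes x I, ← mul_assoc,
      ← Quaternion.coe_commutes y I]
  -- first derivative
  have hD1 := aux_hasDeriv a R hconv ((y : Quaternion ℝ) * I) 1 (by rw [one_mul, mul_one])
    (by simp) x (by simpa [mul_one] using hnormq)
  simp only [mul_one] at hD1
  -- second derivative
  have hD2 := aux_hasDeriv a R hconv ((x : Quaternion ℝ)) I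
    (by rw [← Quaternion.coe_commutes]) (le_of_eq hInorm) y
    (by rw [add_comm]; exact hnormq)
  have hfun2 : (fun t : ℝ =>
      ∑' n : ℕ, ((x : Quaternion ℝ) + (t : Quaternion ℝ) * I) ^ n * a n)
      = (fun t : ℝ => ∑' n : ℕ, ((t : Quaternion ℝ) * I + (x : Quaternion ℝ)) ^ n * a n) := by
    funext t; rw [tsum_congr]; intro n; rw [add_comm]
  rw [hD1.deriv, hfun2, hD2.deriv]
  have hq2 : (y : Quaternion ℝ) * I + (x : Quaternion ℝ)
      = (x : Quaternion ℝ) + (y : Quaternion ℝ) * I := add_comm _ _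
  rw [hq2]
  set q : Quaternion ℝ := (x : Quaternion ℝ) + (y : Quaternion ℝ) * I with hq_def
  rw [← tsum_mul_left]
  have hterm : ∀ n : ℕ, I * ((n : Quaternion ℝ) * q ^ (n - 1) * I * a n)
      = -((n : Quaternion ℝ) * q ^ (n - 1) * a n) := by
    intro n
    have hpc : I * q ^ (n - 1) = q ^ (n - 1) * I := (Commute.pow_right hIq (n - 1)).eq
    have hnc : I * (n : Quaternion ℝ) = (n : Quaternion ℝ) * I := (Nat.cast_commute n I).symm.eq
    calc I * ((n : Quaternion ℝ) * q ^ (n - 1) * I * a n)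
        = ((I * (n : Quaternion ℝ)) * q ^ (n - 1) * I) * a n := by
          simp only [mul_assoc]
      _ = (((n : Quaternion ℝ) * I) * q ^ (n - 1) * I) * a n := by rw [hnc]
      _ = ((n : Quaternion ℝ) * (I * q ^ (n - 1)) * I) * a n := by rw [mul_assoc ((n : Quaternion ℝ))]
      _ = ((n : Quaternion ℝ) * (q ^ (n - 1) * I) * I) * a n := by rw [hpc]
      _ = ((n : Quaternion ℝ) * q ^ (n - 1) * (I * I)) * a n := by
          simp only [mul_assoc]
      _ = -((n : Quaternion ℝ) * q ^ (n - 1) * a n) := by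
          rw [hII]; simp [mul_assoc]
  have hneg : (∑' n : ℕ, I * ((n : Quaternion ℝ) * q ^ (n - 1) * I * a n))
      = -∑' n : ℕ, (n : Quaternion ℝ) * q ^ (n - 1) * a n := by
    rw [tsum_congr hterm, tsum_neg]
  rw [hneg]
  exact add_neg_cancel _
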